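/- Under the pairing {f, g} = res_0(σ_{−1}(f)·g) on R × R, the orthogonal complement of R^+ is exactly R^+: one has {f, g} = 0 for all f, g ∈ R^+, and conversely any f ∈ R satisfying res_0(σ_{−1}(g)·f) = 0 for all g ∈ R^+ lies in R^+. -/

import Mathlib

open Filter Topology

noncomputable section

variable (p : ℕ) [Fact p.Prime]
variable (L : Type) [NontriviallyNormedField L] [NormedAlgebra ℚ_[p] L]
  [FiniteDimensional ℚ_[p] L]

variable {p L} in
/-- `f = ∑_{i∈ℤ} a_i T^i` (given by its coefficient function `a : ℤ → L`) lies in the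
Robba ring `R`: it converges on some annulus `0 < v_p(T) ≤ r`, i.e. for every radius
`t` with `r₀ ≤ t < 1` one has `‖a_i‖·t^i → 0` as `i → ±∞`. -/
def IsRobba (a : ℤ → L) : Prop :=
  ∃ r₀ : ℝ, 0 < r₀ ∧ r₀ < 1 ∧ ∀ t : ℝ, r₀ ≤ t → t < 1 →
    Tendsto (fun i : ℤ => ‖a i‖ * t ^ i) (cocompact ℤ) (𝓝 0)

variable {p L} in
/-- `f ∈ R^+ ⊆ R`: a power series `∑_{i≥0} a_i T^i` converging on the open unit disk. -/
def IsRobbaPlus (a : ℤ → L) : Prop :=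
  IsRobba a ∧ ∀ i : ℤ, i < 0 → a i = 0

/-- The generalized binomial coefficient `binom(z, n) = z(z-1)⋯(z-n+1)/n!` in `L`. -/
def genChoose (z : ℤ) (n : ℕ) : L :=
  (∏ j ∈ Finset.range n, ((z : L) - (j : L))) / (n.factorial : L)

variable {p L} in
/-- The coefficients of `σ₋₁(f)(T) = f((1+T)⁻¹ - 1)`: using
`((1+T)⁻¹ - 1)^i = (-1)^i T^i (1+T)^{-i}`, the `k`-th coefficient is
`∑_{i ≤ k} a_i·(-1)^i·binom(-i, k-i)`. -/
def sigmaNegOne (a : ℤ → L) : ℤ → L := fun k =>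
  ∑' i : ℤ, if i ≤ k then a i * ((-1 : L) ^ i) * genChoose L (-i) ((k - i).toNat) else 0

variable {p L} in
/-- The Cauchy product of two Laurent series. -/
def lmul (a b : ℤ → L) : ℤ → L := fun k => ∑' i : ℤ, a i * b (k - i)

variable {p L} in
/-- `res₀(f)`: the coefficient of `T⁻¹` in `f/(1+T) = f·∑_{m≥0}(-1)^m T^m`, i.e.
`∑_{m≥0} (-1)^m a_{-1-m}`. -/
def res0 (a : ℤ → L) : L := ∑' m : ℕ, ((-1 : L) ^ m) * a (-1 - (m : ℤ))

section AuxLemmas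

variable {R : Type} [NontriviallyNormedField R]

omit [NontriviallyNormedField R] in
lemma genChoose_zero [NontriviallyNormedField R] (z : ℤ) : genChoose R z 0 = 1 := by
  simp [genChoose]

lemma idA (n K : ℕ) :
    ∑ j ∈ Finset.range (K + 1),
        ((-1 : ℤ) ^ j * ((K - 1).choose j : ℤ) * ((K - j).choose n : ℤ))
      = (if K = n then 1 else 0) + (if K = n + 1 then 1 else 0) := by
  cases K with
  | zero =>
    cases n with
    | zero => simp
    | succ n => simp
  | succ K =>
    have h2 : (Polynomial.X ^ (K + 1) + Polynomial.X ^ K : Polynomial ℤ)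
        = ∑ m ∈ Finset.range (K + 1),
            Polynomial.C ((-1 : ℤ) ^ (K - m) * (K.choose m : ℤ)) * (Polynomial.X + 1) ^ (m + 1) := by
      rw [show (Polynomial.X ^ (K + 1) + Polynomial.X ^ K : Polynomial ℤ)
          = (Polynomial.X + 1) * ((Polynomial.X + 1) + (-1)) ^ K by ring, add_pow,
        Finset.mul_sum]
      refine Finset.sum_congr rfl fun m _ => ?_
      have hC : (Polynomial.C ((-1 : ℤ) ^ (K - m) * (K.choose m : ℤ)) : Polynomial ℤ)
          = (-1) ^ (K - m) * (K.choose m : Polynomial ℤ) := by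
        simp [map_mul, map_pow]
      rw [hC]; ring
    have h3 := congrArg (fun q : Polynomial ℤ => q.coeff n) h2
    simp only [Polynomial.coeff_add, Polynomial.coeff_X_pow, Polynomial.finset_sum_coeff,
      Polynomial.coeff_C_mul, Polynomial.coeff_X_add_one_pow] at h3
    rw [Finset.sum_range_succ]
    have hlast : ((-1 : ℤ) ^ (K + 1) * ((K + 1 - 1).choose (K + 1) : ℤ)
        * ((K + 1 - (K + 1)).choose n : ℤ)) = 0 := by
      simp [Nat.choose_succ_self]
    rw [hlast, add_zero]
    have hrefl := Finset.sum_range_reflect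
      (fun j => ((-1 : ℤ) ^ j * ((K + 1 - 1).choose j : ℤ) * ((K + 1 - j).choose n : ℤ))) (K + 1)
    rw [← hrefl]
    have hterm : ∀ m ∈ Finset.range (K + 1),
        ((-1 : ℤ) ^ (K + 1 - 1 - m) * ((K + 1 - 1).choose (K + 1 - 1 - m) : ℤ)
          * ((K + 1 - (K + 1 - 1 - m)).choose n : ℤ))
        = (-1 : ℤ) ^ (K - m) * (K.choose m : ℤ) * ((m + 1).choose n : ℤ) := by
      intro m hm
      rw [Finset.mem_range] at hm
      have e2 : K + 1 - (K + 1 - 1 - m) = m + 1 := by omega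
      have e1 : K + 1 - 1 - m = K - m := by omega
      have e0 : K + 1 - 1 = K := by omega
      rw [e2, e1, e0, Nat.choose_symm (by omega)]
    rw [Finset.sum_congr rfl hterm, ← h3]
    split_ifs <;> omega

lemma idA' (n K : ℕ) :
    ∑ j ∈ Finset.range (K + 1),
        ((-1 : R) ^ j * ((K - 1).choose j : R) * ((K - j).choose n : R))
      = (if K = n then 1 else 0) + (if K = n + 1 then 1 else 0) := by
  have h := congrArg (fun z : ℤ => (z : R)) (idA n K)
  push_cast [apply_ite (fun z : ℤ => (z : R))] at h
  convert h using 2 <;> push_cast <;> ring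

lemma genChoose_neg_natCast [CharZero R] (i m : ℕ) :
    genChoose R (-(i : ℤ)) m = (-1 : R) ^ m * ((i + m - 1).choose m : R) := by
  have hasc : (i : ℕ).ascFactorial m = ∏ j ∈ Finset.range m, (i + j) := by
    induction m with
    | zero => simp
    | succ m ih => rw [Finset.prod_range_succ, ← ih, Nat.ascFactorial_succ]; ring
  have hnum : ∏ j ∈ Finset.range m, (((-(i : ℤ) : ℤ) : R) - (j : R))
      = (-1 : R) ^ m * (i.ascFactorial m : R) := by
    have h1 : ∀ j ∈ Finset.range m, (((-(i : ℤ) : ℤ) : R) - (j : R))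
        = (-1 : R) * ((i : R) + (j : R)) := by
      intro j _; push_cast; ring
    rw [Finset.prod_congr rfl h1, Finset.prod_mul_distrib, Finset.prod_const]
    congr 1
    · simp
    · rw [hasc, Nat.cast_prod]
      exact Finset.prod_congr rfl fun j _ => by push_cast; ring
  have hm : ((m.factorial : ℕ) : R) ≠ 0 := Nat.cast_ne_zero.mpr m.factorial_ne_zero
  simp only [genChoose]
  rw [hnum, Nat.ascFactorial_eq_factorial_mul_choose']
  push_cast
  field_simp

/-- The dual element, defined by recursion so that `sigmaNegOne` of it is
`δ_n + δ_{n+1}`. -/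
noncomputable def G {F : Type} [Field F] (gc : ℤ → ℕ → F) (n : ℕ) : ℕ → F
  | j => (-1 : F) ^ (n + j) *
      (((if j = 0 then (1 : F) else 0) + (if j = 1 then 1 else 0)) -
        ∑ i : Fin j, G gc n i * (-1 : F) ^ (n + (i : ℕ)) *
          gc (-((n : ℤ) + (i : ℕ))) (j - (i : ℕ)))
  decreasing_by exact i.isLt

noncomputable def gg (n : ℕ) : ℤ → R := fun k =>
  if k < (n : ℤ) then 0 else G (genChoose R) n (k - n).toNat

lemma sigma_eq_sum (n : ℕ) (u : ℤ → R) (hu : ∀ j : ℤ, j < (n : ℤ) → u j = 0)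
    (k : ℤ) (hk : (n : ℤ) ≤ k) :
    sigmaNegOne u k = ∑ a ∈ Finset.range ((k - n).toNat + 1),
      u ((n : ℤ) + a) * ((-1 : R) ^ ((n : ℤ) + (a : ℕ))) *
        genChoose R (-((n : ℤ) + (a : ℕ))) ((k - n).toNat - a) := by
  simp only [sigmaNegOne]
  set J : ℕ := (k - n).toNat with hJ
  set emb : Function.Embedding ℕ ℤ :=
    ⟨fun a => (n : ℤ) + a, fun a b h => by simp only [] at h; omega⟩ with hemb
  have hzero : ∀ i ∉ Finset.map emb (Finset.range (J + 1)),
      (if i ≤ k then u i * ((-1 : R) ^ i) * genChoose R (-i) ((k - i).toNat) else 0) = 0 := by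
    intro i hi
    simp only [Finset.mem_map, Finset.mem_range, hemb, Function.Embedding.coeFn_mk] at hi
    push_neg at hi
    by_cases h1 : i ≤ k
    · have h2 : i < (n : ℤ) := by
        by_contra h3
        push_neg at h3
        exact hi (i - n).toNat (by omega) (by show (n : ℤ) + (((i - n).toNat : ℕ) : ℤ) = i; omega)
      rw [if_pos h1, hu i h2, zero_mul, zero_mul]
    · rw [if_neg h1]
  rw [tsum_eq_sum hzero, Finset.sum_map]
  refine Finset.sum_congr rfl fun a ha => ?_
  rw [Finset.mem_range] at ha
  have he : emb a = (n : ℤ) + a := rfl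
  rw [he, if_pos (by omega : (n : ℤ) + a ≤ k)]
  have h3 : (k - ((n : ℤ) + a)).toNat = J - a := by omega
  rw [h3]

lemma sigma_gg (n : ℕ) (k : ℤ) :
    sigmaNegOne (gg (R := R) n) k
      = (if k = (n : ℤ) then 1 else 0) + (if k = (n : ℤ) + 1 then 1 else 0) := by
  by_cases hk : k < (n : ℤ)
  · have hz : sigmaNegOne (gg (R := R) n) k = 0 := by
      simp only [sigmaNegOne]
      have hzz : ∀ i : ℤ,
          (if i ≤ k then gg (R := R) n i * ((-1 : R) ^ i) *
            genChoose R (-i) ((k - i).toNat) else 0) = 0 := by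
        intro i
        split_ifs with h
        · rw [show gg (R := R) n i = 0 from if_pos (by omega), zero_mul, zero_mul]
        · rfl
      rw [tsum_congr hzz, tsum_zero]
    rw [hz, if_neg (by omega), if_neg (by omega)]
    ring
  · push_neg at hk
    rw [sigma_eq_sum n (gg (R := R) n)
      (fun j hj => by simp only [gg]; rw [if_pos hj]) k hk]
    set J : ℕ := (k - n).toNat with hJ
    have hTa : ∀ a ∈ Finset.range (J + 1),
        gg (R := R) n ((n : ℤ) + a) * ((-1 : R) ^ ((n : ℤ) + (a : ℕ))) *
          genChoose R (-((n : ℤ) + (a : ℕ))) (J - a)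
        = G (genChoose R) n a * (-1 : R) ^ (n + a) *
          genChoose R (-((n : ℤ) + (a : ℕ))) (J - a) := by
      intro a _
      have h1 : gg (R := R) n ((n : ℤ) + a) = G (genChoose R) n a := by
        rw [show gg (R := R) n ((n : ℤ) + a)
            = G (genChoose R) n (((n : ℤ) + a - n).toNat) from if_neg (by omega)]
        congr 1
        omega
      have h2 : ((-1 : R) ^ ((n : ℤ) + (a : ℕ))) = (-1 : R) ^ (n + a) := by
        rw [show ((n : ℤ) + (a : ℕ)) = ((n + a : ℕ) : ℤ) by push_cast; ring, zpow_natCast]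
      rw [h1, h2]
    rw [Finset.sum_congr rfl hTa, Finset.sum_range_succ]
    have hlast : G (genChoose R) n J * (-1 : R) ^ (n + J) *
        genChoose R (-((n : ℤ) + (J : ℕ))) (J - J)
        = ((if J = 0 then (1 : R) else 0) + (if J = 1 then 1 else 0))
          - ∑ a ∈ Finset.range J, G (genChoose R) n a * (-1 : R) ^ (n + a) *
              genChoose R (-((n : ℤ) + (a : ℕ))) (J - a) := by
      rw [Nat.sub_self, genChoose_zero, mul_one, G]
      rw [← Finset.sum_range (fun a => G (genChoose R) n a * (-1 : R) ^ (n + a) *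
        genChoose R (-((n : ℤ) + (a : ℕ))) (J - a))]
      have hsq : (-1 : R) ^ (n + J) * (-1 : R) ^ (n + J) = 1 := by
        rw [← mul_pow]; norm_num
      linear_combination ((((if J = 0 then (1 : R) else 0) + (if J = 1 then 1 else 0))
        - ∑ a ∈ Finset.range J, G (genChoose R) n a * (-1 : R) ^ (n + a) *
            genChoose R (-((n : ℤ) + (a : ℕ))) (J - a))) * hsq
    rw [hlast]
    rw [show (∑ a ∈ Finset.range J, G (genChoose R) n a * (-1 : R) ^ (n + a) *
        genChoose R (-((n : ℤ) + (a : ℕ))) (J - a))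
        + (((if J = 0 then (1 : R) else 0) + (if J = 1 then 1 else 0))
          - ∑ a ∈ Finset.range J, G (genChoose R) n a * (-1 : R) ^ (n + a) *
              genChoose R (-((n : ℤ) + (a : ℕ))) (J - a))
        = ((if J = 0 then (1 : R) else 0) + (if J = 1 then 1 else 0)) by ring]
    congr 1
    · exact if_congr (by omega) rfl rfl
    · exact if_congr (by omega) rfl rfl

lemma SG [CharZero R] (n j : ℕ) :
    ∑ a ∈ Finset.range (j + 1),
      ((-1 : R) ^ (n + a) * ((n + a).choose n : R)) * ((-1 : R) ^ (n + a)) *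
        genChoose R (-((n : ℤ) + (a : ℕ))) (j - a)
    = (if j = 0 then 1 else 0) + (if j = 1 then 1 else 0) := by
  have step1 : ∀ a ∈ Finset.range (j + 1),
      ((-1 : R) ^ (n + a) * ((n + a).choose n : R)) * ((-1 : R) ^ (n + a)) *
        genChoose R (-((n : ℤ) + (a : ℕ))) (j - a)
      = ((n + a).choose n : R) * ((-1 : R) ^ (j - a) * ((n + j - 1).choose (j - a) : R)) := by
    intro a ha
    rw [Finset.mem_range] at ha
    rw [show (-((n : ℤ) + (a : ℕ))) = -(((n + a : ℕ) : ℤ)) by push_cast; ring,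
      genChoose_neg_natCast, show (n + a) + (j - a) - 1 = n + j - 1 by omega]
    have hsq : (-1 : R) ^ (n + a) * (-1 : R) ^ (n + a) = 1 := by rw [← mul_pow]; norm_num
    linear_combination (((n + a).choose n : R) * ((-1 : R) ^ (j - a))
      * (((n + j - 1).choose (j - a) : R))) * hsq
  rw [Finset.sum_congr rfl step1]
  have step2 : ∑ a ∈ Finset.range (j + 1),
      ((n + a).choose n : R) * ((-1 : R) ^ (j - a) * ((n + j - 1).choose (j - a) : R))
      = ∑ x ∈ Finset.range (j + 1),
        ((-1 : R) ^ x * ((n + j - 1).choose x : R) * ((n + j - x).choose n : R)) := by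
    refine Finset.sum_nbij' (fun a => j - a) (fun x => j - x) ?_ ?_ ?_ ?_ ?_
    · intro a ha; rw [Finset.mem_range] at ha; show j - a ∈ Finset.range (j + 1)
      rw [Finset.mem_range]; omega
    · intro x hx; rw [Finset.mem_range] at hx; show j - x ∈ Finset.range (j + 1)
      rw [Finset.mem_range]; omega
    · intro a ha; rw [Finset.mem_range] at ha; show j - (j - a) = a; omega
    · intro x hx; rw [Finset.mem_range] at hx; show j - (j - x) = x; omega
    · intro a ha
      rw [Finset.mem_range] at ha
      rw [show n + j - (j - a) = n + a by omega]
      ring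
  rw [step2, Finset.sum_subset (Finset.range_subset_range.mpr (by omega : j + 1 ≤ n + j + 1)) ?_]
  · rw [idA' n (n + j)]
    congr 1
    · exact if_congr (by omega) rfl rfl
    · exact if_congr (by omega) rfl rfl
  · intro x hx hnx
    rw [Finset.mem_range] at hx
    rw [Finset.mem_range] at hnx
    push_neg at hnx
    rw [Nat.choose_eq_zero_of_lt (by omega : n + j - x < n), Nat.cast_zero, mul_zero]

lemma G_char0 [CharZero R] (n : ℕ) :
    ∀ j, G (genChoose R) n j = (-1 : R) ^ (n + j) * ((n + j).choose n : R) := by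
  intro j
  induction j using Nat.strong_induction_on with
  | _ j IH =>
    rw [G]
    rw [← Finset.sum_range (fun a => G (genChoose R) n a * (-1 : R) ^ (n + a) *
      genChoose R (-((n : ℤ) + (a : ℕ))) (j - a))]
    have hstep : ∀ a ∈ Finset.range j,
        G (genChoose R) n a * (-1 : R) ^ (n + a) * genChoose R (-((n : ℤ) + (a : ℕ))) (j - a)
        = ((-1 : R) ^ (n + a) * ((n + a).choose n : R)) * ((-1 : R) ^ (n + a)) *
          genChoose R (-((n : ℤ) + (a : ℕ))) (j - a) := by
      intro a ha
      rw [IH a (Finset.mem_range.mp ha)]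
    rw [Finset.sum_congr rfl hstep]
    have hSG := SG (R := R) n j
    rw [Finset.sum_range_succ, Nat.sub_self, genChoose_zero, mul_one] at hSG
    have hsq : (-1 : R) ^ (n + j) * (-1 : R) ^ (n + j) = 1 := by rw [← mul_pow]; norm_num
    linear_combination (-((-1 : R) ^ (n + j))) * hSG
      + ((-1 : R) ^ (n + j) * ((n + j).choose n : R)) * hsq

lemma norm_le_one_of_mem_range {r : ℕ} (hr : r.Prime) [CharP R r] {x : R}
    (hx : x ∈ (ZMod.castHom (dvd_refl r) R).range) : ‖x‖ ≤ 1 := by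
  haveI : Fact r.Prime := ⟨hr⟩
  rw [RingHom.mem_range] at hx
  obtain ⟨y, rfl⟩ := hx
  have h1 : (ZMod.castHom (dvd_refl r) R) y ^ r = (ZMod.castHom (dvd_refl r) R) y := by
    rw [← map_pow, ZMod.pow_card]
  have h2 : ‖(ZMod.castHom (dvd_refl r) R) y‖ ^ r = ‖(ZMod.castHom (dvd_refl r) R) y‖ := by
    rw [← norm_pow, h1]
  by_contra hc
  push_neg at hc
  have h3 : ‖(ZMod.castHom (dvd_refl r) R) y‖ < ‖(ZMod.castHom (dvd_refl r) R) y‖ ^ 2 := by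
    nlinarith [norm_nonneg ((ZMod.castHom (dvd_refl r) R) y)]
  have h4 : ‖(ZMod.castHom (dvd_refl r) R) y‖ ^ 2 ≤ ‖(ZMod.castHom (dvd_refl r) R) y‖ ^ r :=
    pow_le_pow_right₀ (by linarith) hr.two_le
  linarith [h2.ge]

lemma G_mem_range_charP {r : ℕ} (hr : r.Prime) [CharP R r] (n : ℕ) :
    ∀ j, G (genChoose R) n j ∈ (ZMod.castHom (dvd_refl r) R).range := by
  haveI : Fact r.Prime := ⟨hr⟩
  have hdiv : ∀ x y : R, x ∈ (ZMod.castHom (dvd_refl r) R).range →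
      y ∈ (ZMod.castHom (dvd_refl r) R).range →
      x / y ∈ (ZMod.castHom (dvd_refl r) R).range := by
    intro x y hx hy
    rw [RingHom.mem_range] at hx hy ⊢
    obtain ⟨a, rfl⟩ := hx
    obtain ⟨b, rfl⟩ := hy
    exact ⟨a / b, map_div₀ _ _ _⟩
  have hgen : ∀ (z : ℤ) (m : ℕ),
      genChoose R z m ∈ (ZMod.castHom (dvd_refl r) R).range := by
    intro z m
    simp only [genChoose]
    apply hdiv
    · exact prod_mem fun j _ => sub_mem (intCast_mem _ z) (natCast_mem _ j)
    · exact natCast_mem _ _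
  intro j
  induction j using Nat.strong_induction_on with
  | _ j IH =>
    rw [G]
    refine mul_mem (pow_mem (neg_mem (one_mem _)) _) (sub_mem (add_mem ?_ ?_) ?_)
    · split_ifs
      · exact one_mem _
      · exact zero_mem _
    · split_ifs
      · exact one_mem _
      · exact zero_mem _
    · exact sum_mem fun i _ =>
        mul_mem (mul_mem (IH i i.isLt) (pow_mem (neg_mem (one_mem _)) _)) (hgen _ _)

lemma aux_tendsto_poly (d : ℕ) {t : ℝ} (ht0 : 0 < t) (ht1 : t < 1) :
    Tendsto (fun j : ℕ => (((j + 1 : ℕ) : ℝ)) ^ d * t ^ j) atTop (𝓝 0) := by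
  have h1 : Tendsto (fun m : ℕ => ((m : ℝ)) ^ d * t ^ m) atTop (𝓝 0) :=
    tendsto_pow_const_mul_const_pow_of_abs_lt_one d (by rwa [abs_of_pos ht0])
  have h2 : Tendsto (fun j : ℕ => j + 1) atTop atTop := tendsto_add_atTop_nat 1
  have h3 := (h1.comp h2).mul_const t⁻¹
  rw [zero_mul] at h3
  apply h3.congr
  intro j
  simp only [Function.comp_apply]
  rw [pow_succ]
  field_simp

lemma gg_isRobbaPlus (n : ℕ) : IsRobbaPlus (gg (R := R) n) := by
  obtain ⟨d, hd⟩ : ∃ d : ℕ, ∀ j : ℕ, ‖G (genChoose R) n j‖ ≤ ((n + j + 1 : ℕ) : ℝ) ^ d := by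
    rcases CharP.char_is_prime_or_zero R (ringChar R) with hr | hr
    · refine ⟨0, fun j => ?_⟩
      have h1 := norm_le_one_of_mem_range (R := R) hr (G_mem_range_charP hr n j)
      simpa using h1
    · haveI : CharP R 0 := by rw [← hr]; exact ringChar.charP R
      haveI : CharZero R := CharP.charP_to_charZero R
      refine ⟨n, fun j => ?_⟩
      rw [G_char0, norm_mul, norm_pow, norm_neg, norm_one, one_pow, one_mul]
      have hnat : (n + j).choose n ≤ (n + j + 1) ^ n :=
        le_trans (Nat.choose_le_pow (n + j) n) (Nat.pow_le_pow_left (by omega) n)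
      calc ‖((n + j).choose n : R)‖ ≤ ((n + j).choose n : ℝ) := by
            have h2 := Nat.norm_cast_le (α := R) ((n + j).choose n)
            rwa [norm_one, mul_one] at h2
        _ ≤ ((n + j + 1 : ℕ) : ℝ) ^ n := by exact_mod_cast hnat
  constructor
  · refine ⟨1/2, by norm_num, by norm_num, fun t ht ht1 => ?_⟩
    have ht0 : (0 : ℝ) < t := lt_of_lt_of_le (by norm_num) ht
    rw [cocompact_eq_cofinite, Int.cofinite_eq, tendsto_sup]
    constructor
    · apply Tendsto.congr' ?_ (tendsto_const_nhds (x := (0 : ℝ)))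
      filter_upwards [eventually_lt_atBot (0 : ℤ)] with i hi
      rw [show gg (R := R) n i = 0 from if_pos (by omega), norm_zero, zero_mul]
    · have hB : ∀ i : ℤ, 0 ≤ i → ‖gg (R := R) n i‖ ≤ ((i.toNat + n + 1 : ℕ) : ℝ) ^ d := by
        intro i hi
        by_cases hin : i < (n : ℤ)
        · rw [show gg (R := R) n i = 0 from if_pos hin, norm_zero]
          positivity
        · push_neg at hin
          rw [show gg (R := R) n i = G (genChoose R) n (i - n).toNat from if_neg (by omega)]
          refine le_trans (hd (i - n).toNat) ?_
          have h5 : ((n + (i - (n : ℤ)).toNat + 1 : ℕ)) ^ d ≤ ((i.toNat + n + 1 : ℕ)) ^ d :=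
            Nat.pow_le_pow_left (by omega) d
          exact_mod_cast h5
      apply squeeze_zero' (g := fun i : ℤ => ((i.toNat + n + 1 : ℕ) : ℝ) ^ d * t ^ i)
      · exact Eventually.of_forall fun i => by positivity
      · filter_upwards [eventually_ge_atTop (0 : ℤ)] with i hi
        exact mul_le_mul_of_nonneg_right (hB i hi) (zpow_pos ht0 i).le
      · have hN : Tendsto (fun j : ℕ => ((j + n + 1 : ℕ) : ℝ) ^ d * t ^ j) atTop (𝓝 0) := by
          have h1 := aux_tendsto_poly d ht0 ht1
          have h2 : Tendsto (fun j : ℕ => j + n) atTop atTop := tendsto_add_atTop_nat n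
          have h3 := (h1.comp h2).mul_const ((t ^ n)⁻¹)
          rw [zero_mul] at h3
          apply h3.congr
          intro j
          simp only [Function.comp_apply]
          rw [show j + n + 1 = (j + n) + 1 from rfl, pow_add]
          field_simp
        have h2 : Tendsto (fun i : ℤ => i.toNat) atTop atTop :=
          tendsto_atTop_atTop.mpr fun b => ⟨(b : ℤ), fun a ha => by omega⟩
        apply (hN.comp h2).congr'
        filter_upwards [eventually_ge_atTop (0 : ℤ)] with i hi
        simp only [Function.comp_apply]
        rw [← zpow_natCast t, Int.toNat_of_nonneg hi]
  · intro i hi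
    exact if_pos (by omega)

lemma hasSum_telescope {a : ℕ → R} (h : Summable fun m => ‖a m‖) :
    HasSum (fun m => a m - a (m + 1)) (a 0) := by
  have key : Tendsto (fun s : Finset ℕ => ∑ m ∈ s, (a m - a (m + 1))) atTop (𝓝 (a 0)) := by
    rw [Metric.tendsto_atTop]
    intro ε hε
    obtain ⟨s₀, hs₀⟩ := summable_iff_vanishing.mp h (Metric.ball 0 (ε / 3))
      (Metric.ball_mem_nhds 0 (by linarith))
    set N : ℕ := (s₀.sup id) + 1 with hN
    refine ⟨Finset.range N, fun s hs => ?_⟩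
    have hbound : ∀ u : Finset ℕ, Disjoint u s₀ → ‖∑ m ∈ u, a m‖ < ε / 3 := by
      intro u hu
      have h1 := hs₀ u hu
      rw [Metric.mem_ball, dist_zero_right, Real.norm_eq_abs] at h1
      calc ‖∑ m ∈ u, a m‖ ≤ ∑ m ∈ u, ‖a m‖ := norm_sum_le _ _
        _ ≤ |∑ m ∈ u, ‖a m‖| := le_abs_self _
        _ < ε / 3 := h1
    set tt : Finset ℕ := s.image (· + 1) with htt
    have himg : ∑ m ∈ s, a (m + 1) = ∑ m ∈ tt, a m := by
      rw [htt, Finset.sum_image (by intro x _ y _ hxy; exact Nat.add_right_cancel hxy)]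
    have hsplit : ∑ m ∈ s, (a m - a (m + 1)) = ∑ m ∈ s \ tt, a m - ∑ m ∈ tt \ s, a m := by
      rw [Finset.sum_sub_distrib, himg, Finset.sum_sdiff_sub_sum_sdiff]
    have h0s : (0 : ℕ) ∈ s \ tt := by
      rw [Finset.mem_sdiff]
      refine ⟨hs (Finset.mem_range.mpr (by omega)), ?_⟩
      rw [htt]
      simp
    have hsum0 : ∑ m ∈ s \ tt, a m = ∑ m ∈ (s \ tt).erase 0, a m + a 0 :=
      (Finset.sum_erase_add _ _ h0s).symm
    rw [dist_eq_norm, hsplit,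
      show (∑ m ∈ s \ tt, a m - ∑ m ∈ tt \ s, a m) - a 0
        = ∑ m ∈ (s \ tt).erase 0, a m - ∑ m ∈ tt \ s, a m by rw [hsum0]; ring]
    have hd1 : Disjoint ((s \ tt).erase 0) s₀ := by
      rw [Finset.disjoint_left]
      intro m hm hm0
      have hm1 := Finset.mem_of_mem_erase hm
      have hmne : m ≠ 0 := Finset.ne_of_mem_erase hm
      rw [Finset.mem_sdiff] at hm1
      have hms : m - 1 ∉ s := by
        intro hc
        exact hm1.2 (by rw [htt]; exact Finset.mem_image.mpr ⟨m - 1, hc, by omega⟩)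
      have hmN : ¬ (m - 1) ∈ Finset.range N := fun hc => hms (hs hc)
      rw [Finset.mem_range] at hmN
      have hup : m ≤ s₀.sup id := Finset.le_sup (f := id) hm0
      omega
    have hd2 : Disjoint (tt \ s) s₀ := by
      rw [Finset.disjoint_left]
      intro m hm hm0
      rw [Finset.mem_sdiff] at hm
      have h7 : m ∉ Finset.range N := fun hc => hm.2 (hs hc)
      rw [Finset.mem_range] at h7
      have hup : m ≤ s₀.sup id := Finset.le_sup (f := id) hm0
      omega
    calc ‖∑ m ∈ (s \ tt).erase 0, a m - ∑ m ∈ tt \ s, a m‖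
        ≤ ‖∑ m ∈ (s \ tt).erase 0, a m‖ + ‖∑ m ∈ tt \ s, a m‖ := norm_sub_le _ _
      _ < ε / 3 + ε / 3 := add_lt_add (hbound _ hd1) (hbound _ hd2)
      _ < ε := by linarith
  exact key

lemma tail_norm_summable {f : ℤ → R} (hf : IsRobba f) (c : ℤ) :
    Summable (fun m : ℕ => ‖f (c - m)‖) := by
  obtain ⟨r, hr0, hr1, H⟩ := hf
  have H1 : Tendsto (fun i : ℤ => ‖f i‖ * r ^ i) atBot (𝓝 0) := by
    have h0 := H r le_rfl hr1
    rw [cocompact_eq_cofinite, Int.cofinite_eq] at h0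
    exact h0.mono_left le_sup_left
  have hev : ∀ᶠ i : ℤ in atBot, ‖f i‖ * r ^ i < 1 := H1.eventually_lt_const one_pos
  rw [eventually_atBot] at hev
  obtain ⟨J, hJ⟩ := hev
  set M : ℕ := (c - J).toNat with hM
  have key : ∀ m : ℕ, ‖f (c - ((m + M : ℕ) : ℤ))‖ ≤ (r ^ M * r ^ (-c)) * r ^ m := by
    intro m
    have hcm : c - ((m + M : ℕ) : ℤ) ≤ J := by omega
    have h1 : ‖f (c - ((m + M : ℕ) : ℤ))‖ * r ^ (c - ((m + M : ℕ) : ℤ)) < 1 := hJ _ hcm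
    have h2 : (0 : ℝ) < r ^ (c - ((m + M : ℕ) : ℤ)) := zpow_pos hr0 _
    calc ‖f (c - ((m + M : ℕ) : ℤ))‖ ≤ 1 / r ^ (c - ((m + M : ℕ) : ℤ)) :=
          (le_div_iff₀ h2).mpr h1.le
      _ = (r ^ M * r ^ (-c)) * r ^ m := by
          rw [one_div, ← zpow_neg,
            show -(c - ((m + M : ℕ) : ℤ)) = ((M : ℤ) + (-c)) + (m : ℤ) by push_cast; ring,
            zpow_add₀ (ne_of_gt hr0), zpow_add₀ (ne_of_gt hr0), zpow_natCast, zpow_natCast]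
  have hsum1 : Summable (fun m : ℕ => (r ^ M * r ^ (-c)) * r ^ m) :=
    (summable_geometric_of_lt_one hr0.le hr1).mul_left _
  have hsum2 : Summable (fun m : ℕ => ‖f (c - ((m + M : ℕ) : ℤ))‖) :=
    Summable.of_nonneg_of_le (fun m => norm_nonneg _) key hsum1
  exact (summable_nat_add_iff M).mp hsum2

lemma lmul_delta (n : ℕ) (f : ℤ → R) (s : ℤ → R)
    (hs : ∀ k, s k = (if k = (n : ℤ) then 1 else 0) + (if k = (n : ℤ) + 1 then 1 else 0))
    (k : ℤ) : lmul s f k = f (k - n) + f (k - n - 1) := by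
  simp only [lmul]
  have hz : ∀ i : ℤ, i ∉ ({(n : ℤ), (n : ℤ) + 1} : Finset ℤ) → s i * f (k - i) = 0 := by
    intro i hi
    simp only [Finset.mem_insert, Finset.mem_singleton] at hi
    push_neg at hi
    rw [hs, if_neg hi.1, if_neg hi.2, add_zero, zero_mul]
  rw [tsum_eq_sum hz, Finset.sum_pair (by omega), hs, hs,
    if_pos rfl, if_neg (by omega), if_neg (by omega), if_pos rfl]
  rw [show k - ((n : ℤ) + 1) = k - n - 1 by ring]
  ring

lemma res0_shift {f : ℤ → R} (hf : IsRobba f) (n : ℕ) :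
    res0 (fun k => f (k - n) + f (k - n - 1)) = f (-1 - n) := by
  set a : ℕ → R := fun m => (-1 : R) ^ m * f (-1 - (n : ℤ) - m) with hadef
  have hnorm : Summable (fun m => ‖a m‖) := by
    apply (tail_norm_summable hf (-1 - (n : ℤ))).congr
    intro m
    simp only [hadef, norm_mul, norm_pow, norm_neg, norm_one, one_pow, one_mul]
  have htel := hasSum_telescope hnorm
  have hterm : ∀ m : ℕ, (-1 : R) ^ m * (f (-1 - (m : ℤ) - n) + f (-1 - (m : ℤ) - n - 1))
      = a m - a (m + 1) := by
    intro m
    simp only [hadef]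
    rw [show (-1 - (m : ℤ) - n - 1) = -1 - (n : ℤ) - ((m + 1 : ℕ) : ℤ) by push_cast; ring,
      show (-1 - (m : ℤ) - n) = -1 - (n : ℤ) - m by ring,
      pow_succ]
    ring
  simp only [res0]
  rw [tsum_congr hterm, htel.tsum_eq]
  simp only [hadef]
  norm_num

end AuxLemmas

/-- **Statement 14.** Under the pairing `{f,g} = res₀(σ₋₁(f)·g)` on `R × R`, the
orthogonal complement of `R^+` is exactly `R^+`: one has `{f,g} = 0` for all
`f, g ∈ R^+`, and conversely any `f ∈ R` satisfying `res₀(σ₋₁(g)·f) = 0` for all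
`g ∈ R^+` lies in `R^+`. -/
theorem robbaPlus_orthogonal_complement_self :
    (∀ f g : ℤ → L, IsRobbaPlus f → IsRobbaPlus g →
      res0 (lmul (sigmaNegOne f) g) = 0) ∧
    (∀ f : ℤ → L, IsRobba f →
      (∀ g : ℤ → L, IsRobbaPlus g → res0 (lmul (sigmaNegOne g) f) = 0) →
      IsRobbaPlus f) := by
  constructor
  · intro f g hf hg
    have hsf : ∀ k : ℤ, k < 0 → sigmaNegOne f k = 0 := by
      intro k hk
      simp only [sigmaNegOne]
      have hz : ∀ i : ℤ,
          (if i ≤ k then f i * ((-1 : L) ^ i) * genChoose L (-i) ((k - i).toNat) else 0) = 0 := by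
        intro i
        split_ifs with h
        · rw [hf.2 i (by omega), zero_mul, zero_mul]
        · rfl
      rw [tsum_congr hz, tsum_zero]
    have hc : ∀ k : ℤ, k < 0 → lmul (sigmaNegOne f) g k = 0 := by
      intro k hk
      simp only [lmul]
      have hz : ∀ i : ℤ, sigmaNegOne f i * g (k - i) = 0 := by
        intro i
        rcases lt_or_ge i 0 with h | h
        · rw [hsf i h, zero_mul]
        · rw [hg.2 (k - i) (by omega), mul_zero]
      rw [tsum_congr hz, tsum_zero]
    simp only [res0]
    have hz : ∀ m : ℕ, ((-1 : L) ^ m) * (lmul (sigmaNegOne f) g) (-1 - (m : ℤ)) = 0 := fun m => by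
      rw [hc _ (by omega), mul_zero]
    rw [tsum_congr hz, tsum_zero]
  · intro f hf H
    refine ⟨hf, fun i hi => ?_⟩
    set n : ℕ := (-1 - i).toNat with hn
    have hin : i = -1 - (n : ℤ) := by omega
    have h0 := H (gg (R := L) n) (gg_isRobbaPlus (R := L) n)
    rw [show sigmaNegOne (gg (R := L) n)
        = fun k => (if k = (n : ℤ) then (1 : L) else 0) + (if k = (n : ℤ) + 1 then 1 else 0)
        from funext (sigma_gg (R := L) n)] at h0
    rw [show lmul (fun k => (if k = (n : ℤ) then (1 : L) else 0)
          + (if k = (n : ℤ) + 1 then 1 else 0)) f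
        = fun k => f (k - n) + f (k - n - 1)
        from funext (lmul_delta (R := L) n f _ (fun _ => rfl))] at h0
    rw [res0_shift (R := L) hf n] at h0
    rw [hin]
    exact h0
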